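/- For every positive integer k there is no sequence p : ℕ → ℕ satisfying, for each n ≥ 1, either p_n = 1 or p_n is a prime with p_n ≡ 1 (mod n), such that (∑_{d | n} log p_d)/(k·log n) → 1 as n → ∞. -/

import Mathlib

theorem no_polynomial_growth_F_method (k : ℕ) (hk : 1 ≤ k) :
    ¬ ∃ p : ℕ → ℕ,
        (∀ n : ℕ, 1 ≤ n → p n = 1 ∨ ((p n).Prime ∧ p n ≡ 1 [MOD n])) ∧
        Filter.Tendsto
          (fun n : ℕ => (∑ d ∈ n.divisors, Real.log (p d)) / (k * Real.log n))
          Filter.atTop (nhds 1) := by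
  rintro ⟨p, hp, htend⟩
  set S : ℕ → ℝ := fun n => ∑ d ∈ n.divisors, Real.log (p d) with hSdef
  have hL : (0:ℝ) < Real.log 2 := Real.log_pos (by norm_num)
  have hk' : (1:ℝ) ≤ (k:ℝ) := by exact_mod_cast hk
  have hkpos : (0:ℝ) < k := by linarith
  -- log p n ≥ 0
  have hone : ∀ n, 1 ≤ n → 1 ≤ p n := by
    intro n hn
    rcases hp n hn with h | ⟨h, _⟩
    · omega
    · exact h.one_lt.le
  have hlognn : ∀ n, 1 ≤ n → 0 ≤ Real.log (p n) := by
    intro n hn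
    exact Real.log_nonneg (by exact_mod_cast hone n hn)
  -- S(2^m) as sum over range
  have hS : ∀ m : ℕ, S (2 ^ m) = ∑ i ∈ Finset.range (m + 1), Real.log (p (2 ^ i)) := by
    intro m
    simp only [hSdef]
    exact Nat.sum_divisors_prime_pow Nat.prime_two
  -- lower bound on log p (2^i) when p (2^i) ≠ 1
  have hlow : ∀ i : ℕ, 1 ≤ i → p (2 ^ i) ≠ 1 →
      (i : ℝ) * Real.log 2 ≤ Real.log (p (2 ^ i)) := by
    intro i hi hne
    rcases hp (2 ^ i) Nat.one_le_two_pow with h | ⟨hpr, hmod⟩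
    · exact absurd h hne
    have h1 : 1 ≤ p (2 ^ i) := hpr.one_lt.le
    have hdvd : 2 ^ i ∣ p (2 ^ i) - 1 := (Nat.modEq_iff_dvd' h1).mp hmod.symm
    have hne1 : p (2 ^ i) - 1 ≠ 0 := by
      have := hpr.two_le; omega
    have hge : 2 ^ i ≤ p (2 ^ i) - 1 := Nat.le_of_dvd (Nat.pos_of_ne_zero hne1) hdvd
    have hge' : (2 : ℕ) ^ i ≤ p (2 ^ i) := by omega
    calc (i : ℝ) * Real.log 2 = Real.log ((2:ℝ) ^ i) := by
          rw [Real.log_pow]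
      _ ≤ Real.log (p (2 ^ i)) := by
          apply Real.log_le_log (by positivity)
          exact_mod_cast hge'
  -- get N from tendsto with ε = 1/(4k)
  set ε : ℝ := 1 / (4 * k) with hεdef
  have hεpos : 0 < ε := by positivity
  have hεk : ε * k = 1 / 4 := by
    field_simp [hεdef]
    rw [hεdef]; field_simp
  have hεle : ε ≤ 1 / 4 := by
    rw [hεdef]
    rw [div_le_div_iff₀ (by positivity) (by norm_num)]
    linarith
  obtain ⟨N, hN⟩ := Metric.tendsto_atTop.mp htend ε hεpos
  -- bounds for n ≥ max N 2
  have hbd : ∀ n : ℕ, N ≤ n → 2 ≤ n →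
      (1 - ε) * ((k:ℝ) * Real.log n) ≤ S n ∧ S n ≤ (1 + ε) * ((k:ℝ) * Real.log n) := by
    intro n hn h2
    have hlogn : 0 < Real.log n := Real.log_pos (by exact_mod_cast h2)
    have hden : 0 < (k:ℝ) * Real.log n := by positivity
    have := hN n hn
    rw [Real.dist_eq, abs_sub_lt_iff] at this
    obtain ⟨h1, h2'⟩ := this
    constructor
    · have : 1 - ε < S n / ((k:ℝ) * Real.log n) := by linarith
      calc (1 - ε) * ((k:ℝ) * Real.log n) ≤ (S n / ((k:ℝ) * Real.log n)) * ((k:ℝ) * Real.log n) := by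
            apply mul_le_mul_of_nonneg_right this.le hden.le
        _ = S n := by field_simp
    · have : S n / ((k:ℝ) * Real.log n) < 1 + ε := by linarith
      calc S n = (S n / ((k:ℝ) * Real.log n)) * ((k:ℝ) * Real.log n) := by field_simp
        _ ≤ (1 + ε) * ((k:ℝ) * Real.log n) := mul_le_mul_of_nonneg_right this.le hden.le
  -- n ≥ N when n = 2^m, m ≥ N+1
  set I : ℕ := N + 3 * k + 2 with hIdef
  have hpow : ∀ m : ℕ, I ≤ m → N ≤ 2 ^ m ∧ 2 ≤ 2 ^ m := by
    intro m hm
    constructor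
    · calc N ≤ m := by omega
        _ ≤ 2 ^ m := Nat.le_of_lt m.lt_two_pow_self
    · calc 2 = 2 ^ 1 := rfl
        _ ≤ 2 ^ m := Nat.pow_le_pow_right (by norm_num) (by omega)
  have hlog2pow : ∀ m : ℕ, Real.log (((2 ^ m : ℕ) : ℝ)) = (m : ℝ) * Real.log 2 := by
    intro m
    rw [Nat.cast_pow, Real.log_pow]
    norm_num
  -- key: for m ≥ I, log p (2^(m+1)) = 0
  have key : ∀ m : ℕ, I ≤ m → Real.log (p (2 ^ (m + 1))) = 0 := by
    intro m hm
    by_contra hne0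
    have hne : p (2 ^ (m + 1)) ≠ 1 := by
      intro h; rw [h] at hne0; simp at hne0
    have hc := hlow (m + 1) (by omega) hne
    obtain ⟨hNm, h2m⟩ := hpow m hm
    obtain ⟨hNm1, h2m1⟩ := hpow (m + 1) (by omega)
    have hub := (hbd (2 ^ (m + 1)) hNm1 h2m1).2
    have hlb := (hbd (2 ^ m) hNm h2m).1
    have hsplit : S (2 ^ (m + 1)) = S (2 ^ m) + Real.log (p (2 ^ (m + 1))) := by
      rw [hS, hS, Finset.sum_range_succ]
    rw [hlog2pow] at hub hlb
    -- log p (2^(m+1)) ≤ (1+ε) k (m+1) L - (1-ε) k m L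
    have hcu : Real.log (p (2 ^ (m + 1))) ≤
        (1 + ε) * ((k:ℝ) * ((m + 1 : ℕ) * Real.log 2)) - (1 - ε) * ((k:ℝ) * ((m:ℕ) * Real.log 2)) := by
      linarith [hsplit, hub, hlb]
    have hcc : ((m:ℝ) + 1) * Real.log 2 ≤
        (1 + ε) * ((k:ℝ) * (((m:ℝ) + 1) * Real.log 2)) - (1 - ε) * ((k:ℝ) * ((m:ℝ) * Real.log 2)) := by
      push_cast at hcu hc
      linarith [hc, hcu]
    -- simplify: RHS = (2 ε k m + (1+ε) k) L = (m/2 + ... ) L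
    have hexp : (1 + ε) * ((k:ℝ) * (((m:ℝ) + 1) * Real.log 2)) - (1 - ε) * ((k:ℝ) * ((m:ℝ) * Real.log 2))
        = (2 * (ε * k) * m + (1 + ε) * k) * Real.log 2 := by ring
    rw [hexp, hεk] at hcc
    have hmle : (m:ℝ) + 1 ≤ 2 * (1/4) * m + (1 + ε) * k :=
      le_of_mul_le_mul_right hcc hL
    -- so m + 1 ≤ m/2 + (5/4) k, i.e. m/2 ≤ (5/4)k - 1 ⇒ m ≤ (5/2)k
    have hmk : (m:ℝ) ≤ 3 * k := by nlinarith [hεle, hεpos, hk']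
    have : (m:ℕ) ≤ 3 * k := by exact_mod_cast hmk
    omega
  -- S(2^m) constant for m ≥ I
  have hconst : ∀ m : ℕ, I ≤ m → S (2 ^ m) = S (2 ^ I) := by
    intro m hm
    induction m with
    | zero => omega
    | succ n ih =>
      rcases Nat.lt_or_ge I (n + 1) with h | h
      · have hIn : I ≤ n := by omega
        have : S (2 ^ (n + 1)) = S (2 ^ n) + Real.log (p (2 ^ (n + 1))) := by
          rw [hS, hS, Finset.sum_range_succ]
        rw [this, key n hIn, ih hIn, add_zero]
      · have : I = n + 1 := by omega
        rw [this]
  -- contradiction: S(2^m) ≥ (1-ε) k m L → ∞ but constant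
  obtain ⟨M, hM⟩ := exists_nat_gt (2 * S (2 ^ I) / Real.log 2)
  set m := max M I with hmdef
  have hmI : I ≤ m := le_max_right _ _
  have hmM : M ≤ m := le_max_left _ _
  obtain ⟨hNm, h2m⟩ := hpow m hmI
  have hlb := (hbd (2 ^ m) hNm h2m).1
  rw [hlog2pow] at hlb
  rw [hconst m hmI] at hlb
  -- (1-ε) k m L ≥ (3/4) * 1 * m * L ≥ (1/2) m L
  have h34 : (3/4 : ℝ) * ((m:ℝ) * Real.log 2) ≤ (1 - ε) * ((k:ℝ) * ((m:ℝ) * Real.log 2)) := by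
    have hml : (0:ℝ) ≤ (m:ℝ) * Real.log 2 := by positivity
    nlinarith [hεle, hεpos, hk']
  have hMm : 2 * S (2 ^ I) / Real.log 2 < (m:ℝ) := lt_of_lt_of_le hM (by exact_mod_cast hmM)
  have : 2 * S (2 ^ I) < (m:ℝ) * Real.log 2 := by
    rw [div_lt_iff₀ hL] at hMm
    linarith
  have hml : (0:ℝ) ≤ (m:ℝ) * Real.log 2 := by positivity
  linarith
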